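/- For A > 0, the polynomial P(H) = 128H³ - 9(H - 9A²/2)⁴ has exactly one root in the interval (9A²/2, ∞). -/
import Mathlib


open Set

lemma no_two_roots (c x y : ℝ) (hc : 0 < c) (hx : c < x) (hy : c < y)
    (hxy : x < y)
    (hfx : 128 * x^3 - 9 * (x - c)^4 = 0)
    (hfy : 128 * y^3 - 9 * (y - c)^4 = 0) : False := by
  have hx0 : 0 < x := hc.trans hx
  have hy0 : 0 < y := hc.trans hy
  have h1 : y * (x - c) < x * (y - c) := by nlinarith
  have h1' : 0 ≤ y * (x - c) := by nlinarith
  have h2 : (y * (x - c))^3 < (x * (y - c))^3 := by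
    exact pow_lt_pow_left₀ h1 h1' (by norm_num)
  have h3 : y^3 * (x - c)^4 < x^3 * (y - c)^4 := by
    have hbc : x - c < y - c := by linarith
    have h3' : (y * (x - c))^3 * (x - c) < (x * (y - c))^3 * (y - c) :=
      mul_lt_mul h2 hbc.le (by linarith) (pow_nonneg (mul_nonneg hx0.le (by linarith)) 3)
    calc y^3 * (x - c)^4 = (y * (x - c))^3 * (x - c) := by ring
      _ < (x * (y - c))^3 * (y - c) := h3'
      _ = x^3 * (y - c)^4 := by ring
  have e1 : 9 * (x - c)^4 = 128 * x^3 := by linarith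
  have e2 : 9 * (y - c)^4 = 128 * y^3 := by linarith
  have hlt : 128 * x^3 * y^3 < 128 * x^3 * y^3 := by
    calc 128 * x^3 * y^3 = y^3 * (9 * (x - c)^4) := by rw [e1]; ring
      _ < x^3 * (9 * (y - c)^4) := by linarith
      _ = 128 * x^3 * y^3 := by rw [e2]; ring
  exact lt_irrefl _ hlt

theorem unique_root_discriminant
    (A : ℝ) (hA : 0 < A) :
    ∃! H : ℝ, H ∈ Ioi (9 * A^2 / 2) ∧
      128 * H^3 - 9 * (H - 9 * A^2 / 2)^4 = 0 := by
  set c := 9 * A^2 / 2 with hc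
  have hc0 : 0 < c := by positivity
  set f : ℝ → ℝ := fun H => 128 * H^3 - 9 * (H - c)^4 with hf
  set b := max (2 * c) 256 with hb
  have hcb : c ≤ b := le_trans (by linarith) (le_max_left _ _)
  have hcb2 : 2 * c ≤ b := le_max_left _ _
  have hb256 : (256 : ℝ) ≤ b := le_max_right _ _
  have hfc : 0 < f c := by simp only [hf]; ring_nf; positivity
  have hfb : f b < 0 := by
    simp only [hf]
    have h1 : b / 2 ≤ b - c := by linarith
    have h2 : (b / 2)^4 ≤ (b - c)^4 := by
      apply pow_le_pow_left₀ (by linarith) h1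
    have hb0 : (0:ℝ) < b := by linarith
    nlinarith [h2, mul_pos (mul_pos hb0 hb0) hb0]
  have hcont : ContinuousOn f (Icc c b) := by fun_prop
  obtain ⟨x, hxm, hfx⟩ := intermediate_value_Icc' hcb hcont ⟨hfb.le, hfc.le⟩
  have hxc : c < x := by
    rcases eq_or_lt_of_le hxm.1 with h | h
    · exfalso; rw [← h] at hfx; linarith [hfx ▸ hfc]
    · exact h
  refine ⟨x, ⟨hxc, hfx⟩, ?_⟩
  rintro y ⟨hy, hfy⟩
  rcases lt_trichotomy y x with h | h | h
  · exact absurd (no_two_roots c y x hc0 hy hxc h hfy hfx) (not_false)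
  · exact h
  · exact absurd (no_two_roots c x y hc0 hxc hy h hfx hfy) (not_false)
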